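/- arXiv:2512.00629 — 2 statements merged into one kernel-verified Lean document; each statement's English description precedes it below -/
import Mathlib

section
/- If Ω = {x : Hx ≤ 1} is a polytope equal to the convex hull of vertices {v^p}, W has support function φ_W, and for each vertex p there exists u^p ∈ U (U convex) such that for every facet i, ⟨H_i, f(v^p, u^p)⟩ ≤ F_i(v^p,u^p) ≤ λ − φ_W(H_i) with F_i jointly convex in (x,u) and F_i an upper bound of ⟨H_i, f(·,·)⟩ on Ω × U, then for every x ∈ Ω there exists u ∈ U such that f(x,u) + w ∈ λΩ for all w ∈ W. -/
/-- Vertex condition implies one-step robust contraction: if `Ω = {x : Hx ≤ 1}` equals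
the convex hull of its vertices `v p`, `U` is convex, each `F i` is jointly convex on
`Ω × U` and upper bounds `⟨H i, f(·,·)⟩` there, and at each vertex there is `u p ∈ U`
with `F i (v p, u p) ≤ λ - φ_W(H i)` for every facet `i`, then for every `x ∈ Ω` there
exists `u ∈ U` with `f x u + w ∈ λΩ = {x : Hx ≤ λ·1}` for all `w ∈ W`. -/
theorem stmt7 {n m nh nv : ℕ} (H : Fin nh → (Fin n → ℝ))
    (Ω : Set (Fin n → ℝ)) (hΩdef : Ω = {x | ∀ i, (∑ k, H i k * x k) ≤ 1})
    (v : Fin nv → (Fin n → ℝ)) (hΩhull : Ω = convexHull ℝ (Set.range v))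
    (U : Set (Fin m → ℝ)) (hU : Convex ℝ U)
    (W : Set (Fin n → ℝ)) (hWne : W.Nonempty) (hWbd : Bornology.IsBounded W)
    (φW : (Fin n → ℝ) → ℝ)
    (hφW : ∀ c, φW c = sSup ((fun w => ∑ i, c i * w i) '' W))
    (lam : ℝ) (hlam : lam ∈ Set.Icc (0 : ℝ) 1)
    (f : (Fin n → ℝ) → (Fin m → ℝ) → (Fin n → ℝ))
    (F : Fin nh → ((Fin n → ℝ) × (Fin m → ℝ)) → ℝ)
    (hFconv : ∀ i, ConvexOn ℝ (Ω ×ˢ U) (F i))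
    (hFub : ∀ i, ∀ x ∈ Ω, ∀ u ∈ U, (∑ k, H i k * f x u k) ≤ F i (x, u))
    (u : Fin nv → (Fin m → ℝ)) (hu : ∀ p, u p ∈ U)
    (hvert : ∀ i p, F i (v p, u p) ≤ lam - φW (H i)) :
    ∀ x ∈ Ω, ∃ u' ∈ U, ∀ w ∈ W, ∀ i, (∑ k, H i k * (f x u' k + w k)) ≤ lam := by
  intro x hx
  -- support function bound
  have hφle : ∀ c : Fin n → ℝ, ∀ w ∈ W, (∑ k, c k * w k) ≤ φW c := by
    intro c w hw
    obtain ⟨C, hC⟩ := isBounded_iff_forall_norm_le.mp hWbd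
    have hbdd : BddAbove ((fun w => ∑ i, c i * w i) '' W) := by
      refine ⟨∑ k, |c k| * C, ?_⟩
      rintro y ⟨w', hw', rfl⟩
      refine Finset.sum_le_sum fun k _ => ?_
      calc c k * w' k ≤ |c k * w' k| := le_abs_self _
        _ = |c k| * |w' k| := abs_mul _ _
        _ ≤ |c k| * C := by
            refine mul_le_mul_of_nonneg_left ?_ (abs_nonneg _)
            exact (norm_le_pi_norm w' k).trans (hC w' hw')
    rw [hφW]
    exact le_csSup hbdd ⟨w, hw, rfl⟩
  -- hull representation
  have hx' := hx
  rw [hΩhull, convexHull_eq] at hx'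
  obtain ⟨ι, t, wt, z, hw0, hw1, hz, hxeq⟩ := hx'
  have htne : t.Nonempty := by
    by_contra h
    rw [Finset.not_nonempty_iff_eq_empty] at h
    simp [h] at hw1
  obtain ⟨i0, hi0⟩ := htne
  obtain ⟨q0, _⟩ := hz i0 hi0
  haveI : Nonempty (Fin nv) := ⟨q0⟩
  classical
  let p : ι → Fin nv := fun i => if h : ∃ q, v q = z i then h.choose else Classical.arbitrary _
  have hp : ∀ i ∈ t, v (p i) = z i := by
    intro i hi
    have h : ∃ q, v q = z i := hz i hi
    simp only [p, dif_pos h]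
    exact h.choose_spec
  have hwsum : (0:ℝ) < ∑ i ∈ t, wt i := by rw [hw1]; norm_num
  set u' : Fin m → ℝ := t.centerMass wt (fun i => u (p i)) with hu'def
  have hu'U : u' ∈ U := by
    have := t.centerMass_mem_convexHull (fun i _ => hw0 i ‹_›) hwsum
      (fun i _ => hu (p i) : ∀ i ∈ t, u (p i) ∈ U)
    rwa [hU.convexHull_eq] at this
  refine ⟨u', hu'U, ?_⟩
  have hxc : t.centerMass wt (fun i => v (p i)) = x := by
    rw [← hxeq]
    unfold Finset.centerMass
    congr 1
    exact Finset.sum_congr rfl fun i hi => by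
      show wt i • v (p i) = wt i • z i
      rw [hp i hi]
  have hpair : t.centerMass wt (fun i => ((v (p i), u (p i)) : (Fin n → ℝ) × (Fin m → ℝ)))
      = (x, u') := by
    refine Prod.ext ?_ ?_
    · simp only [Finset.centerMass, Prod.smul_fst, Prod.fst_sum] at *
      exact hxc
    · simp only [Finset.centerMass, Prod.smul_snd, Prod.snd_sum]
      rfl
  have hFle : ∀ i, F i (x, u') ≤ lam - φW (H i) := by
    intro i
    have hmem : ∀ j ∈ t, ((v (p j), u (p j)) : (Fin n → ℝ) × (Fin m → ℝ)) ∈ Ω ×ˢ U := by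
      intro j hj
      refine ⟨?_, hu (p j)⟩
      rw [hΩhull]
      exact subset_convexHull ℝ _ ⟨p j, rfl⟩
    have h1 := (hFconv i).map_centerMass_le (fun j hj => hw0 j hj) hwsum hmem
    rw [hpair] at h1
    refine h1.trans ?_
    have h2 : t.centerMass wt ((F i) ∘ fun j => ((v (p j), u (p j)) : (Fin n → ℝ) × (Fin m → ℝ)))
        ≤ t.centerMass wt (fun _ => lam - φW (H i)) := by
      unfold Finset.centerMass
      refine smul_le_smul_of_nonneg_left ?_ (inv_nonneg.mpr hwsum.le)
      refine Finset.sum_le_sum fun j hj => ?_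
      exact smul_le_smul_of_nonneg_left (hvert i (p j)) (hw0 j hj)
    refine h2.trans ?_
    rw [Finset.centerMass_eq_of_sum_1 _ _ hw1]
    rw [← Finset.sum_smul, hw1, one_smul]
  intro w hw i
  have hsplit : (∑ k, H i k * (f x u' k + w k))
      = (∑ k, H i k * f x u' k) + ∑ k, H i k * w k := by
    rw [← Finset.sum_add_distrib]
    exact Finset.sum_congr rfl fun k _ => by ring
  rw [hsplit]
  have := hFub i x hx u' hu'U
  have h3 := hφle (H i) w hw
  linarith [hFle i]
end

section
/- Enlarging step preserves contractiveness: if Ω = conv{v¹,…,v^{n_v}} satisfies the vertex condition F_i(v^p, u^p) ≤ λ − φ_W(H_i) for all facets i of a polytope Ω̂ = conv(Ω ∪ {x̂}) with Ω̂ = {x : Ĥx ≤ 1}, and additionally there exists û ∈ U with F̂_i(x̂, û) ≤ λ − φ_W(Ĥ_i) for all facets i of Ω̂, where F̂_i is jointly convex and upper bounds ⟨Ĥ_i, f⟩, and the original vertices also satisfy F̂_i(v^p, u^p) ≤ λ − φ_W(Ĥ_i), then for every x ∈ Ω̂ there exists u ∈ U with f(x,u) + w ∈ λΩ̂ for all w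 ∈ W. -/
/-- Enlarging step preserves contractiveness: if `Ω̂ = conv{v¹,…,v^{nv}, x̂} = {x : Ĥx ≤ 1}`,
each `F̂ i` is jointly convex on `Ω̂ × U` and upper bounds `⟨Ĥ i, f(·,·)⟩` there, the
original vertices satisfy `F̂ i (v p, u p) ≤ λ − φ_W(Ĥ i)` with `u p ∈ U`, and the new
point satisfies `F̂ i (x̂, û) ≤ λ − φ_W(Ĥ i)` with `û ∈ U`, then for every `x ∈ Ω̂` there
exists `u ∈ U` with `f x u + w ∈ λΩ̂ = {x : Ĥx ≤ λ·1}` for all `w ∈ W`. -/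
theorem stmt16 {n m nh nv : ℕ} (Hhat : Fin nh → (Fin n → ℝ))
    (v : Fin nv → (Fin n → ℝ)) (xhat : Fin n → ℝ)
    (Ωhat : Set (Fin n → ℝ))
    (hΩhull : Ωhat = convexHull ℝ (Set.range v ∪ {xhat}))
    (hΩdef : Ωhat = {x | ∀ i, (∑ k, Hhat i k * x k) ≤ 1})
    (U : Set (Fin m → ℝ)) (hU : Convex ℝ U)
    (W : Set (Fin n → ℝ)) (hWne : W.Nonempty) (hWbd : Bornology.IsBounded W)
    (φW : (Fin n → ℝ) → ℝ)
    (hφW : ∀ c, φW c = sSup ((fun w => ∑ i, c i * w i) '' W))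
    (lam : ℝ) (hlam : lam ∈ Set.Icc (0 : ℝ) 1)
    (f : (Fin n → ℝ) → (Fin m → ℝ) → (Fin n → ℝ))
    (F : Fin nh → ((Fin n → ℝ) × (Fin m → ℝ)) → ℝ)
    (hFconv : ∀ i, ConvexOn ℝ (Ωhat ×ˢ U) (F i))
    (hFub : ∀ i, ∀ x ∈ Ωhat, ∀ u ∈ U, (∑ k, Hhat i k * f x u k) ≤ F i (x, u))
    (u : Fin nv → (Fin m → ℝ)) (hu : ∀ p, u p ∈ U)
    (hvert : ∀ i p, F i (v p, u p) ≤ lam - φW (Hhat i))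
    (uhat : Fin m → ℝ) (huhat : uhat ∈ U)
    (hnew : ∀ i, F i (xhat, uhat) ≤ lam - φW (Hhat i)) :
    ∀ x ∈ Ωhat, ∃ u' ∈ U, ∀ w ∈ W, ∀ i,
      (∑ k, Hhat i k * (f x u' k + w k)) ≤ lam := by
  intro x hx
  have hx' : x ∈ convexHull ℝ (Set.range v ∪ {xhat}) := hΩhull ▸ hx
  rw [convexHull_eq] at hx'
  obtain ⟨ι, t, wts, z, hw0, hw1, hzmem, hcm⟩ := hx'
  have hxsum : x = ∑ i ∈ t, wts i • z i := by
    rw [← hcm, Finset.centerMass_eq_of_sum_1 _ _ hw1]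
  -- choose controls for each point
  have huz : ∀ i, ∃ y, y ∈ U ∧ (i ∈ t → ∀ j, F j (z i, y) ≤ lam - φW (Hhat j)) := by
    intro i
    by_cases hi : i ∈ t
    · rcases hzmem i hi with ⟨p, hp⟩ | h
      · exact ⟨u p, hu p, fun _ j => hp ▸ hvert j p⟩
      · have hz : z i = xhat := by simpa using h
        exact ⟨uhat, huhat, fun _ j => by rw [hz]; exact hnew j⟩
    · exact ⟨uhat, huhat, fun h => absurd h hi⟩
  choose y hyU hyF using huz
  refine ⟨∑ i ∈ t, wts i • y i, hU.sum_mem hw0 hw1 (fun i _ => hyU i), ?_⟩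
  set u' : Fin m → ℝ := ∑ i ∈ t, wts i • y i with hu'
  have hu'U : u' ∈ U := hU.sum_mem hw0 hw1 (fun i _ => hyU i)
  -- membership of points in Ωhat ×ˢ U
  have hmem : ∀ i ∈ t, (z i, y i) ∈ Ωhat ×ˢ U := fun i hi =>
    ⟨hΩhull ▸ subset_convexHull ℝ _ (hzmem i hi), hyU i⟩
  -- pair decomposition
  have hpair : (x, u') = ∑ i ∈ t, wts i • (z i, y i) := by
    rw [hxsum, hu']
    ext <;> simp [Prod.fst_sum, Prod.snd_sum]
  have hF : ∀ j, F j (x, u') ≤ lam - φW (Hhat j) := by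
    intro j
    have h1 : F j (∑ i ∈ t, wts i • (z i, y i)) ≤ ∑ i ∈ t, wts i • F j (z i, y i) :=
      (hFconv j).map_sum_le hw0 hw1 hmem
    rw [← hpair] at h1
    refine h1.trans ?_
    calc ∑ i ∈ t, wts i • F j (z i, y i)
        ≤ ∑ i ∈ t, wts i * (lam - φW (Hhat j)) := by
          refine Finset.sum_le_sum fun i hi => ?_
          exact mul_le_mul_of_nonneg_left (hyF i hi j) (hw0 i hi)
      _ = lam - φW (Hhat j) := by rw [← Finset.sum_mul, hw1, one_mul]
  -- support function bound
  have hφ : ∀ c : Fin n → ℝ, ∀ w ∈ W, (∑ k, c k * w k) ≤ φW c := by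
    intro c w hw
    rw [hφW]
    obtain ⟨R, hR⟩ : ∃ R, ∀ w ∈ W, ‖w‖ ≤ R := by
      obtain ⟨R, hR⟩ := hWbd.subset_closedBall 0
      exact ⟨R, fun w hw => by simpa using hR hw⟩
    refine le_csSup ⟨∑ k, |c k| * R, ?_⟩ ⟨w, hw, rfl⟩
    rintro s ⟨w', hw', rfl⟩
    calc ∑ k, c k * w' k ≤ ∑ k, |c k * w' k| :=
          Finset.sum_le_sum fun k _ => le_abs_self _
      _ = ∑ k, |c k| * |w' k| := by simp [abs_mul]
      _ ≤ ∑ k, |c k| * R := by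
          refine Finset.sum_le_sum fun k _ => ?_
          exact mul_le_mul_of_nonneg_left
            (((Real.norm_eq_abs _ ▸ norm_le_pi_norm w' k).trans (hR w' hw'))) (abs_nonneg _)
  intro w hw j
  have hA := hFub j x hx u' hu'U
  have hB := hφ (Hhat j) w hw
  have hsplit : (∑ k, Hhat j k * (f x u' k + w k))
      = (∑ k, Hhat j k * f x u' k) + ∑ k, Hhat j k * w k := by
    rw [← Finset.sum_add_distrib]; exact Finset.sum_congr rfl fun k _ => by ring
  rw [hsplit]
  have := hF j
  linarith
end
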